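/- (Linearization lower bound for the convex body maximal function) Let W be a matrix weight on I₀ and f ∈ L²_W(ℝ^d). Let 𝒞 ⊆ 𝒟, and for each I ∈ 𝒞 let S_I ⊆ I be a measurable set of positive measure such that the sets (S_I)_{I∈𝒞} are pairwise disjoint, and let φ_I : I → [-1,1] be measurable. Then Σ_{I∈𝒞} |S_I| · |⟨W⟩_{S_I}^{1/2} ⟨W⟩_I^{-1} ⟨φ_I W f⟩_I|²_{ℝ^d} ≤ ‖M^c_W f‖²_{L²}. -/

import Mathlib

open MeasureTheory Set
open scoped ENNReal Matrix Pointwise Classical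

noncomputable section

/-- The unit interval `I₀ = [0,1)`. -/
def I0 : Set ℝ := Set.Ico (0 : ℝ) 1

/-- The dyadic interval `[k/2^n, (k+1)/2^n)`. -/
def dyad (n k : ℕ) : Set ℝ := Set.Ico ((k : ℝ) / 2 ^ n) (((k : ℝ) + 1) / 2 ^ n)

/-- Real `d × d` matrices. -/
abbrev Mat (d : ℕ) := Matrix (Fin d) (Fin d) ℝ

/-- The Euclidean norm `|v|_{ℝ^d}`. -/
def enorm2 {d : ℕ} (v : Fin d → ℝ) : ℝ := Real.sqrt (∑ i, v i ^ 2)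

/-- The Euclidean inner product `⟨v, w⟩_{ℝ^d}`. -/
def dotp {d : ℕ} (v w : Fin d → ℝ) : ℝ := ∑ i, v i * w i

open scoped Classical in
/-- The positive semidefinite square root of a positive semidefinite matrix
(junk value `0` if the matrix is not positive semidefinite). -/
def matSqrt {d : ℕ} (A : Mat d) : Mat d := if h : A.PosSemidef then
    h.1.eigenvectorUnitary.1 * Matrix.diagonal ((↑) ∘ Real.sqrt ∘ h.1.eigenvalues) *
      (star h.1.eigenvectorUnitary : Mat d) else 0

/-- Order in the sense of quadratic forms: `A ⩽ B` iff `B - A` is positive semidefinite. -/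
def matLE {d : ℕ} (A B : Mat d) : Prop := (B - A).PosSemidef

/-- The average `⟨g⟩_I = |I|⁻¹ ∫_I g` of a (scalar- or vector-valued) function. -/
def avgOn {E : Type*} [NormedAddCommGroup E] [NormedSpace ℝ E] (I : Set ℝ) (g : ℝ → E) : E :=
  (volume I).toReal⁻¹ • ∫ x in I, g x

/-- The entrywise average `⟨W⟩_I` of a matrix-valued function. -/
def avgMat {d : ℕ} (I : Set ℝ) (W : ℝ → Mat d) : Mat d :=
  Matrix.of fun i j => avgOn I fun x => W x i j

/-- A matrix weight on `I₀`: an integrable function with symmetric values,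
positive definite a.e. on `I₀`. -/
structure IsMatrixWeight (d : ℕ) (W : ℝ → Mat d) : Prop where
  intOn : ∀ i j, IntegrableOn (fun x => W x i j) I0
  symm : ∀ x, (W x).IsSymm
  posdef : ∀ᵐ x ∂(volume.restrict I0), (W x).PosDef

/-- Membership in `L²_W(ℝ^d)`. -/
def MemL2W {d : ℕ} (W : ℝ → Mat d) (f : ℝ → Fin d → ℝ) : Prop :=
  Measurable f ∧ IntegrableOn (fun x => dotp (W x *ᵥ f x) (f x)) I0

/-- The squared norm `‖f‖²_{L²_W} = ∫_{I₀} ⟨W(x) f(x), f(x)⟩ dx`. -/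
def l2normSq {d : ℕ} (W : ℝ → Mat d) (f : ℝ → Fin d → ℝ) : ℝ :=
  ∫ x in I0, dotp (W x *ᵥ f x) (f x)

/-- The average `⟨φ W f⟩_I = |I|⁻¹ ∫_I φ(y) W(y) f(y) dy`. -/
def avgPhiWf {d : ℕ} (I : Set ℝ) (φ : ℝ → ℝ) (W : ℝ → Mat d) (f : ℝ → Fin d → ℝ) :
    Fin d → ℝ :=
  avgOn I fun y => φ y • (W y *ᵥ f y)

/-- Admissible functions `φ : I → [-1,1]`, measurable. -/
def Adm (I : Set ℝ) (φ : ℝ → ℝ) : Prop :=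
  Measurable φ ∧ ∀ y ∈ I, φ y ∈ Set.Icc (-1 : ℝ) 1

/-- The matrix-weighted dyadic convex body maximal function `M^c_W f`,
valued in `ℝ≥0∞`. -/
def McW {d : ℕ} (W : ℝ → Mat d) (f : ℝ → Fin d → ℝ) (x : ℝ) : ℝ≥0∞ :=
  ⨆ (n : ℕ) (k : ℕ) (_ : k < 2 ^ n ∧ x ∈ dyad n k) (φ : ℝ → ℝ) (_ : Adm (dyad n k) φ),
    ENNReal.ofReal
      (enorm2 (matSqrt (W x) *ᵥ ((avgMat (dyad n k) W)⁻¹ *ᵥ avgPhiWf (dyad n k) φ W f)))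


/-! ### Auxiliary lemmas -/

lemma enorm2_nonneg' {d : ℕ} (v : Fin d → ℝ) : 0 ≤ enorm2 v := Real.sqrt_nonneg _

lemma dotp_mulVec_expand {d : ℕ} (M : Mat d) (v : Fin d → ℝ) :
    dotp (M *ᵥ v) v = ∑ i, ∑ j, M i j * (v j * v i) := by
  simp only [dotp, Matrix.mulVec, dotProduct, Finset.sum_mul, mul_assoc]

lemma quad_nonneg {d : ℕ} {M : Mat d} (hM : M.PosSemidef) (u : Fin d → ℝ) :
    0 ≤ dotp (M *ᵥ u) u := by
  have h := hM.dotProduct_mulVec_nonneg u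
  simpa [dotp, dotProduct, mul_comm] using h

lemma enorm2_sqrt_quad {d : ℕ} {A : Mat d} (hA : A.PosSemidef) (v : Fin d → ℝ) :
    enorm2 (matSqrt A *ᵥ v) ^ 2 = dotp (A *ᵥ v) v := by
  rw [enorm2, Real.sq_sqrt (Finset.sum_nonneg fun i _ => sq_nonneg _)]
  set R : Mat d := hA.1.eigenvectorUnitary.1 * Matrix.diagonal ((↑) ∘ Real.sqrt ∘ hA.1.eigenvalues) *
      (star hA.1.eigenvectorUnitary : Mat d) with hR
  have hm : matSqrt A = R := dif_pos hA
  have hUU : (star hA.1.eigenvectorUnitary : Mat d) * hA.1.eigenvectorUnitary.1 = 1 :=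
    Unitary.coe_star_mul_self _
  have hsymT : Rᵀ = R := by
    rw [← Matrix.conjTranspose_eq_transpose_of_trivial, hR]
    simp [Matrix.conjTranspose_mul, Matrix.star_eq_conjTranspose, Matrix.diagonal_conjTranspose,
      mul_assoc]
  have hsq : R * R = A := by
    conv_rhs => rw [hA.1.spectral_theorem]
    rw [hR, Unitary.conjStarAlgAut_apply]
    have hD : Matrix.diagonal ((↑) ∘ Real.sqrt ∘ hA.1.eigenvalues) *
        Matrix.diagonal ((↑) ∘ Real.sqrt ∘ hA.1.eigenvalues) =
        Matrix.diagonal (RCLike.ofReal ∘ hA.1.eigenvalues : Fin d → ℝ) := by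
      rw [Matrix.diagonal_mul_diagonal]
      congr 1; funext i
      simp [Real.mul_self_sqrt (hA.eigenvalues_nonneg i)]
    calc _ = hA.1.eigenvectorUnitary.1 * Matrix.diagonal ((↑) ∘ Real.sqrt ∘ hA.1.eigenvalues) *
          ((star hA.1.eigenvectorUnitary : Mat d) * hA.1.eigenvectorUnitary.1) *
          Matrix.diagonal ((↑) ∘ Real.sqrt ∘ hA.1.eigenvalues) *
          (star hA.1.eigenvectorUnitary : Mat d) := by simp only [mul_assoc]
      _ = _ := by rw [hUU, mul_one, mul_assoc _ (Matrix.diagonal _) (Matrix.diagonal _), hD]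
  have key : ∑ i, (R *ᵥ v) i ^ 2
      = dotProduct (R *ᵥ v) (R *ᵥ v) := by
    simp [dotProduct, sq]
  rw [hm, key, Matrix.dotProduct_mulVec]
  have h2 : (R *ᵥ v) ᵥ* R = A *ᵥ v := by
    rw [← Matrix.mulVec_transpose, hsymT, Matrix.mulVec_mulVec, hsq]
  rw [h2]; rfl

lemma integral_quad_eq {d : ℕ} (W : ℝ → Mat d) {S : Set ℝ}
    (hint : ∀ i j, IntegrableOn (fun x => W x i j) S)
    (h0 : volume S ≠ 0) (htop : volume S ≠ ⊤) (v : Fin d → ℝ) :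
    ∫ x in S, dotp (W x *ᵥ v) v = (volume S).toReal * dotp (avgMat S W *ᵥ v) v := by
  have hc : (volume S).toReal ≠ 0 := by
    simp [ENNReal.toReal_ne_zero, h0, htop]
  simp only [dotp_mulVec_expand]
  rw [MeasureTheory.integral_finset_sum _ (fun i _ =>
    integrable_finset_sum _ (fun j _ => (hint i j).mul_const _)), Finset.mul_sum]
  refine Finset.sum_congr rfl fun i _ => ?_
  rw [MeasureTheory.integral_finset_sum _ (fun j _ => (hint i j).mul_const _), Finset.mul_sum]
  refine Finset.sum_congr rfl fun j _ => ?_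
  rw [MeasureTheory.integral_mul_const]
  have hA : avgMat S W i j = (volume S).toReal⁻¹ * ∫ x in S, W x i j := by
    simp [avgMat, avgOn, smul_eq_mul]
  rw [hA]
  field_simp

lemma avgMat_posSemidef {d : ℕ} {W : ℝ → Mat d} (hsymm : ∀ x, (W x).IsSymm)
    {S : Set ℝ} (hint : ∀ i j, IntegrableOn (fun x => W x i j) S)
    (hpos : ∀ᵐ x ∂(volume.restrict S), (W x).PosDef)
    (h0 : volume S ≠ 0) (htop : volume S ≠ ⊤) :
    (avgMat S W).PosSemidef := by
  have hc : (volume S).toReal ≠ 0 := by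
    simp [ENNReal.toReal_ne_zero, h0, htop]
  refine Matrix.PosSemidef.of_dotProduct_mulVec_nonneg ?_ ?_
  · ext i j
    simp only [Matrix.conjTranspose_apply, star_trivial, avgMat, Matrix.of_apply]
    have : (fun x => W x j i) = fun x => W x i j := funext fun x => (hsymm x).apply i j
    rw [this]
  · intro u
    have h1 : 0 ≤ (volume S).toReal * dotp (avgMat S W *ᵥ u) u := by
      rw [← integral_quad_eq W hint h0 htop u]
      exact integral_nonneg_of_ae (hpos.mono fun x hx => quad_nonneg hx.posSemidef u)
    have h2 := mul_nonneg (inv_nonneg.mpr (ENNReal.toReal_nonneg (a := volume S))) h1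
    rw [← mul_assoc, inv_mul_cancel₀ hc, one_mul] at h2
    simpa [dotp, dotProduct, mul_comm] using h2

lemma dyad_subset_I0 {n k : ℕ} (hk : k < 2 ^ n) : dyad n k ⊆ I0 := by
  intro x hx
  obtain ⟨h1, h2⟩ := hx
  refine ⟨le_trans (by positivity) h1, lt_of_lt_of_le h2 ?_⟩
  rw [div_le_one (by positivity)]
  exact_mod_cast Nat.succ_le_of_lt hk

lemma le_McW {d : ℕ} (W : ℝ → Mat d) (f : ℝ → Fin d → ℝ) {n k : ℕ} (hk : k < 2 ^ n)
    {x : ℝ} (hx : x ∈ dyad n k) {ψ : ℝ → ℝ} (hψ : Adm (dyad n k) ψ) :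
    ENNReal.ofReal (enorm2 (matSqrt (W x) *ᵥ
      ((avgMat (dyad n k) W)⁻¹ *ᵥ avgPhiWf (dyad n k) ψ W f))) ≤ McW W f x := by
  rw [McW]
  exact le_iSup_of_le n (le_iSup_of_le k (le_iSup_of_le ⟨hk, hx⟩
    (le_iSup_of_le ψ (le_iSup_of_le hψ le_rfl))))

set_option maxHeartbeats 1000000 in
/-- **Linearization lower bound for the convex body maximal function.**
For `𝒞 ⊆ 𝒟`, pairwise disjoint measurable sets `S_I ⊆ I` of positive measure, and
measurable `φ_I : I → [-1,1]` (`I ∈ 𝒞`),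
`Σ_{I∈𝒞} |S_I| |⟨W⟩_{S_I}^{1/2} ⟨W⟩_I⁻¹ ⟨φ_I W f⟩_I|² ≤ ‖M^c_W f‖²_{L²}`. -/
theorem linearization_lower_bound {d : ℕ} (W : ℝ → Mat d) (hW : IsMatrixWeight d W)
    (f : ℝ → Fin d → ℝ) (hf : MemL2W W f)
    (C : Set (ℕ × ℕ)) (hC : ∀ p ∈ C, p.2 < 2 ^ p.1)
    (S : ℕ × ℕ → Set ℝ)
    (hSmeas : ∀ p ∈ C, MeasurableSet (S p))
    (hSsub : ∀ p ∈ C, S p ⊆ dyad p.1 p.2)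
    (hSpos : ∀ p ∈ C, 0 < volume (S p))
    (hdisj : ∀ p ∈ C, ∀ q ∈ C, p ≠ q → S p ∩ S q = ∅)
    (φ : ℕ × ℕ → ℝ → ℝ) (hφ : ∀ p ∈ C, Adm (dyad p.1 p.2) (φ p)) :
    (∑' p : C,
        ENNReal.ofReal
          ((volume (S p)).toReal *
            enorm2 (matSqrt (avgMat (S p) W) *ᵥ
              ((avgMat (dyad (p : ℕ × ℕ).1 (p : ℕ × ℕ).2) W)⁻¹ *ᵥ
                avgPhiWf (dyad (p : ℕ × ℕ).1 (p : ℕ × ℕ).2) (φ p) W f)) ^ 2)) ≤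
      ∫⁻ x in I0, (McW W f x) ^ 2 := by
  have hvolI0 : volume I0 = 1 := by
    simp [I0, Real.volume_Ico]
  have key : ∀ p ∈ C,
      ENNReal.ofReal ((volume (S p)).toReal *
        enorm2 (matSqrt (avgMat (S p) W) *ᵥ
          ((avgMat (dyad p.1 p.2) W)⁻¹ *ᵥ avgPhiWf (dyad p.1 p.2) (φ p) W f)) ^ 2)
      ≤ ∫⁻ x in S p, (McW W f x) ^ 2 := by
    intro p hp
    set v := (avgMat (dyad p.1 p.2) W)⁻¹ *ᵥ avgPhiWf (dyad p.1 p.2) (φ p) W f with hv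
    have hsub : S p ⊆ I0 := (hSsub p hp).trans (dyad_subset_I0 (hC p hp))
    have h0 : volume (S p) ≠ 0 := (hSpos p hp).ne'
    have htop : volume (S p) ≠ ⊤ :=
      ne_top_of_le_ne_top ENNReal.one_ne_top (le_trans (measure_mono hsub) hvolI0.le)
    have hint : ∀ i j, IntegrableOn (fun x => W x i j) (S p) :=
      fun i j => (hW.intOn i j).mono_set hsub
    have hpos_ae : ∀ᵐ x ∂(volume.restrict (S p)), (W x).PosDef :=
      ae_restrict_of_ae_restrict_of_subset hsub hW.posdef
    have hA : (avgMat (S p) W).PosSemidef :=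
      avgMat_posSemidef hW.symm hint hpos_ae h0 htop
    have hid : (volume (S p)).toReal *
        enorm2 (matSqrt (avgMat (S p) W) *ᵥ v) ^ 2 = ∫ x in S p, dotp (W x *ᵥ v) v := by
      rw [enorm2_sqrt_quad hA, integral_quad_eq W hint h0 htop]
    have hnn : 0 ≤ᵐ[volume.restrict (S p)] fun x => dotp (W x *ᵥ v) v :=
      hpos_ae.mono fun x hx => quad_nonneg hx.posSemidef v
    have hInt : IntegrableOn (fun x => dotp (W x *ᵥ v) v) (S p) := by
      have he : (fun x => dotp (W x *ᵥ v) v)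
          = fun x => ∑ i, ∑ j, W x i j * (v j * v i) :=
        funext fun x => dotp_mulVec_expand (W x) v
      rw [he]
      exact integrable_finset_sum _ fun i _ =>
        integrable_finset_sum _ fun j _ => (hint i j).mul_const _
    rw [hid, ofReal_integral_eq_lintegral_ofReal hInt hnn]
    refine lintegral_mono_ae ?_
    filter_upwards [hpos_ae, ae_restrict_mem (hSmeas p hp)] with x hx hxS
    have hWx : (W x).PosSemidef := hx.posSemidef
    rw [← enorm2_sqrt_quad hWx v, ENNReal.ofReal_pow (enorm2_nonneg' _)]
    exact pow_le_pow_left₀ zero_le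
      (le_McW W f (hC p hp) (hSsub p hp hxS) (hφ p hp)) 2
  refine le_trans (ENNReal.tsum_le_tsum fun p => key p p.2) ?_
  have heq : (∑' p : C, ∫⁻ x in S (p : ℕ × ℕ), (McW W f x) ^ 2)
      = ∫⁻ x in ⋃ p : C, S (p : ℕ × ℕ), (McW W f x) ^ 2 := by
    rw [Measure.restrict_iUnion ?_ fun p : C => hSmeas p.1 p.2, lintegral_sum_measure]
    intro p q hne
    exact Set.disjoint_iff_inter_eq_empty.mpr
      (hdisj p.1 p.2 q.1 q.2 fun h => hne (Subtype.ext h))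
  rw [heq]
  exact lintegral_mono' (Measure.restrict_mono
    (Set.iUnion_subset fun p : C =>
      (hSsub p.1 p.2).trans (dyad_subset_I0 (hC p.1 p.2))) le_rfl) le_rfl
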